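/- Let b₁, …, b_m ∈ ℝⁿ satisfy ∑_{i=1}^m bᵢbᵢᵀ = Iₙ. Then ‖ ∑_{i=1}^m ‖bᵢ‖²·bᵢ ‖² ≤ ∑_{i=1}^m ‖bᵢ‖⁴, where ‖·‖ denotes the Euclidean norm; equivalently, ∑_{i=1}^m ∑_{j=1}^m ‖bᵢ‖²·‖bⱼ‖²·(bᵢᵀbⱼ) ≤ ∑_{i=1}^m ‖bᵢ‖⁴. -/

import Mathlib

open Matrix

private lemma sum_dp {m n : ℕ} (f : Fin m → Fin n → ℝ) (x : Fin n → ℝ) :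
    (∑ i, f i) ⬝ᵥ x = ∑ i, f i ⬝ᵥ x := by
  simp only [dotProduct, Finset.sum_apply, Finset.sum_mul]
  exact Finset.sum_comm

private lemma dp_sum {m n : ℕ} (f : Fin m → Fin n → ℝ) (x : Fin n → ℝ) :
    x ⬝ᵥ (∑ i, f i) = ∑ i, x ⬝ᵥ f i := by
  simp only [dotProduct, Finset.sum_apply, Finset.mul_sum]
  exact Finset.sum_comm

private lemma smul_dp {n : ℕ} (c : ℝ) (x y : Fin n → ℝ) :
    (c • x) ⬝ᵥ y = c * (x ⬝ᵥ y) := by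
  simp [dotProduct, Finset.mul_sum, mul_assoc]

private lemma dp_smul {n : ℕ} (c : ℝ) (x y : Fin n → ℝ) :
    x ⬝ᵥ (c • y) = c * (x ⬝ᵥ y) := by
  simp only [dotProduct, Pi.smul_apply, smul_eq_mul, Finset.mul_sum]
  exact Finset.sum_congr rfl fun i _ => by ring

theorem weighted_sum_inner_le {n m : ℕ} (b : Fin m → Fin n → ℝ)
    (hb : ∑ i, vecMulVec (b i) (b i) = (1 : Matrix (Fin n) (Fin n) ℝ)) :
    (∑ i, (b i ⬝ᵥ b i) • b i) ⬝ᵥ (∑ i, (b i ⬝ᵥ b i) • b i) ≤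
      ∑ i, (b i ⬝ᵥ b i) ^ 2 ∧
    ∑ i, ∑ j, (b i ⬝ᵥ b i) * (b j ⬝ᵥ b j) * (b i ⬝ᵥ b j) ≤
      ∑ i, (b i ⬝ᵥ b i) ^ 2 := by
  set v : Fin n → ℝ := ∑ i, (b i ⬝ᵥ b i) • b i with hv
  have key : ∀ x : Fin n → ℝ, x ⬝ᵥ x = ∑ i, (b i ⬝ᵥ x) ^ 2 := by
    intro x
    have := congrArg (fun M => x ⬝ᵥ (M *ᵥ x)) hb
    simp only [one_mulVec] at this
    rw [← this]
    have hm : (∑ i, vecMulVec (b i) (b i)) *ᵥ x = ∑ i, (b i ⬝ᵥ x) • b i := by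
      ext j
      simp only [mulVec, dotProduct, vecMulVec, Matrix.sum_apply, Finset.sum_apply, of_apply,
        Finset.sum_mul, Pi.smul_apply, smul_eq_mul, Finset.mul_sum]
      rw [Finset.sum_comm]
      exact Finset.sum_congr rfl fun i _ => Finset.sum_congr rfl fun k _ => by ring
    rw [hm, dp_sum]
    exact Finset.sum_congr rfl fun i _ => by
      rw [dp_smul, dotProduct_comm, sq]
  have hvv : v ⬝ᵥ v = ∑ i, (b i ⬝ᵥ b i) * (b i ⬝ᵥ v) := by
    conv_lhs => rw [hv, sum_dp]
    exact Finset.sum_congr rfl fun i _ => by rw [smul_dp]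
  have cs : (v ⬝ᵥ v) ^ 2 ≤ (∑ i, (b i ⬝ᵥ b i) ^ 2) * (v ⬝ᵥ v) := by
    calc (v ⬝ᵥ v) ^ 2 = (∑ i, (b i ⬝ᵥ b i) * (b i ⬝ᵥ v)) ^ 2 := by rw [hvv]
      _ ≤ (∑ i, (b i ⬝ᵥ b i) ^ 2) * (∑ i, (b i ⬝ᵥ v) ^ 2) :=
          Finset.sum_mul_sq_le_sq_mul_sq _ _ _
      _ = (∑ i, (b i ⬝ᵥ b i) ^ 2) * (v ⬝ᵥ v) := by rw [← key]
  have hnn : 0 ≤ v ⬝ᵥ v := Finset.sum_nonneg fun j _ => mul_self_nonneg _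
  have hmain : v ⬝ᵥ v ≤ ∑ i, (b i ⬝ᵥ b i) ^ 2 := by
    rcases hnn.eq_or_lt with h | h
    · rw [← h]; exact Finset.sum_nonneg fun i _ => sq_nonneg _
    · exact (mul_le_mul_iff_of_pos_right h).mp (by rwa [sq] at cs)
  refine ⟨hmain, ?_⟩
  have heq : ∑ i, ∑ j, (b i ⬝ᵥ b i) * (b j ⬝ᵥ b j) * (b i ⬝ᵥ b j) = v ⬝ᵥ v := by
    conv_rhs => rw [hv, sum_dp]
    refine Finset.sum_congr rfl fun i _ => ?_
    rw [smul_dp, ← hv]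
    conv_rhs => rw [hv, dp_sum, Finset.mul_sum]
    exact Finset.sum_congr rfl fun j _ => by rw [dp_smul]; ring
  rwa [heq]
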